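/- Let Φ be a Laurent polynomial over 𝔽_p in the first d−1 variables with at least two nonzero coefficients, and write Φ = X^{−a}·Φ̃ where a ∈ ℕ^{d−1} × {0} and Φ̃ is an ordinary polynomial in 𝔽_p[Y_1,…,Y_{d−1}] not divisible by any variable Y_i. Then the quotient ring R_d/⟨X_d − Φ⟩ of the Laurent polynomial ring R_d = 𝔽_p[X_1^{±1},…,X_d^{±1}] by the principal ideal generated by X_d − Φ is isomorphic, as a ring, to the localization of 𝔽_p[Y_1,…,Y_{d−1}] at the multiplicative submonoid generated by {Y_1,…,Y_{d−1}, Φ̃}. -/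

import Mathlib

namespace Stmt19

open AddMonoidAlgebra Multiplicative

variable (p d : ℕ) [Fact p.Prime]

/-- Extension of exponent vectors from `ℕ^{d-1}` to `ℤ^d`. -/
def Emap : (Fin (d - 1) →₀ ℕ) →+ (Fin d → ℤ) where
  toFun v := fun i => if h : (i : ℕ) < d - 1 then (v ⟨(i : ℕ), h⟩ : ℤ) else 0
  map_zero' := by funext i; by_cases h : (i : ℕ) < d - 1 <;> simp [h]
  map_add' v w := by funext i; by_cases h : (i : ℕ) < d - 1 <;> simp [h]

/-- The embedding of polynomials into Laurent polynomials. -/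
noncomputable def iota : MvPolynomial (Fin (d - 1)) (ZMod p) →+* AddMonoidAlgebra (ZMod p) (Fin d → ℤ) :=
  AddMonoidAlgebra.mapDomainRingHom (ZMod p) (Emap d)

lemma iota_apply (x : MvPolynomial (Fin (d - 1)) (ZMod p)) :
    iota p d x = AddMonoidAlgebra.ofCoeff (Finsupp.mapDomain
      (fun (v : Fin (d - 1) →₀ ℕ) (i : Fin d) =>
        if h : (i : ℕ) < d - 1 then (v ⟨(i : ℕ), h⟩ : ℤ) else 0) (AddMonoidAlgebra.coeff x)) := rfl

lemma iota_monomial (v : Fin (d - 1) →₀ ℕ) (c : ZMod p) :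
    iota p d (MvPolynomial.monomial v c) = AddMonoidAlgebra.single (Emap d v) c := by
  rw [← MvPolynomial.single_eq_monomial]
  show AddMonoidAlgebra.mapDomain _ _ = _
  rw [AddMonoidAlgebra.mapDomain_single]

lemma iota_C (c : ZMod p) :
    iota p d (MvPolynomial.C c) = AddMonoidAlgebra.single (0 : Fin d → ℤ) c := by
  rw [MvPolynomial.C_apply, iota_monomial, map_zero]

def upF : Fin (d - 1) → Fin d := Fin.castLE (Nat.sub_le d 1)

def lastF (hd : 2 ≤ d) : Fin d := ⟨d - 1, Nat.sub_lt (by omega) Nat.one_pos⟩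

lemma Emap_single (i : Fin (d - 1)) :
    Emap d (Finsupp.single i 1) = Pi.single (upF d i) (1 : ℤ) := by
  funext j
  by_cases h : (j : ℕ) < d - 1
  · by_cases hji : (j : ℕ) = (i : ℕ)
    · have h2 : j = upF d i := Fin.ext (by simpa [upF] using hji)
      subst h2
      simp [Emap, upF, Finsupp.single_apply, Pi.single_apply]
    · have h1 : (⟨(j : ℕ), h⟩ : Fin (d - 1)) ≠ i := fun hc => hji (by
        simpa using congrArg Fin.val hc)
      have h2 : j ≠ upF d i := fun hc => hji (by simpa [upF] using congrArg Fin.val hc)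
      simp [Emap, h, Finsupp.single_apply, Ne.symm h1, h2, Pi.single_apply]
  · have h2 : j ≠ upF d i := by
      intro hc
      apply h
      rw [hc]
      simpa [upF] using i.isLt
    simp [Emap, h, h2, Pi.single_apply]

lemma iota_X (i : Fin (d - 1)) :
    iota p d (MvPolynomial.X i) =
      AddMonoidAlgebra.single (Pi.single (upF d i) (1 : ℤ)) (1 : ZMod p) := by
  rw [MvPolynomial.X, iota_monomial, Emap_single]

lemma lastfun_eq (hd : 2 ≤ d) :
    (fun i : Fin d => if (i : ℕ) = d - 1 then (1 : ℤ) else 0) =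
      Pi.single (lastF d hd) (1 : ℤ) := by
  funext j
  simp only [Pi.single_apply, lastF, Fin.ext_iff]


variable (a : Fin d → ℤ) (Φt : MvPolynomial (Fin (d - 1)) (ZMod p))

/-- The multiplicative set. -/
noncomputable abbrev Smon : Submonoid (MvPolynomial (Fin (d - 1)) (ZMod p)) :=
  Submonoid.closure (insert Φt (Set.range MvPolynomial.X))

abbrev Lloc := Localization (Smon p d Φt)

noncomputable def yu (i : Fin (d - 1)) : (Lloc p d Φt)ˣ :=
  (IsLocalization.map_units (M := Smon p d Φt) (Lloc p d Φt)
    ⟨MvPolynomial.X i, Submonoid.subset_closure (Set.mem_insert_of_mem _ ⟨i, rfl⟩)⟩).unit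

noncomputable def su : (Lloc p d Φt)ˣ :=
  (IsLocalization.map_units (M := Smon p d Φt) (Lloc p d Φt)
    ⟨Φt, Submonoid.subset_closure (Set.mem_insert _ _)⟩).unit

lemma yu_val (i : Fin (d - 1)) :
    (yu p d Φt i : Lloc p d Φt) = algebraMap (MvPolynomial (Fin (d - 1)) (ZMod p)) (Lloc p d Φt) (MvPolynomial.X i) :=
  IsUnit.unit_spec _

lemma su_val : (su p d Φt : Lloc p d Φt) = algebraMap (MvPolynomial (Fin (d - 1)) (ZMod p)) (Lloc p d Φt) Φt :=
  IsUnit.unit_spec _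

noncomputable def phiu : (Lloc p d Φt)ˣ :=
  su p d Φt * ∏ i, yu p d Φt i ^ (-(a (upF d i)))

noncomputable def Uh (hd : 2 ≤ d) : Multiplicative (Fin d → ℤ) →* (Lloc p d Φt)ˣ :=
  MonoidHom.mk'
    (fun m => (∏ i, yu p d Φt i ^ (m.toAdd (upF d i))) * phiu p d a Φt ^ (m.toAdd (lastF d hd)))
    (fun x y => by
      simp only [toAdd_mul, Pi.add_apply, zpow_add, Finset.prod_mul_distrib]
      exact mul_mul_mul_comm (G := (Lloc p d Φt)ˣ) _ _ _ _)

lemma Uh_apply (hd : 2 ≤ d) (m : Fin d → ℤ) :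
    Uh p d a Φt hd (ofAdd m) =
      (∏ i, yu p d Φt i ^ (m (upF d i))) * phiu p d a Φt ^ (m (lastF d hd)) := rfl

lemma upF_ne_lastF (hd : 2 ≤ d) (i : Fin (d - 1)) : upF d i ≠ lastF d hd := by
  intro hc
  have := congrArg Fin.val hc
  simp [upF, lastF] at this
  omega

lemma Uh_single_up (hd : 2 ≤ d) (i : Fin (d - 1)) :
    Uh p d a Φt hd (ofAdd (Pi.single (upF d i) (1 : ℤ))) = yu p d Φt i := by
  rw [Uh_apply]
  rw [Pi.single_eq_of_ne (upF_ne_lastF d hd i).symm, zpow_zero, mul_one]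
  rw [Finset.prod_eq_single i]
  · rw [Pi.single_eq_same, zpow_one]
  · intro j _ hj
    have : upF d j ≠ upF d i := fun hc => hj (Fin.castLE_injective _ hc)
    rw [Pi.single_eq_of_ne this, zpow_zero]
  · intro h; exact absurd (Finset.mem_univ i) h

lemma Uh_single_last (hd : 2 ≤ d) :
    Uh p d a Φt hd (ofAdd (Pi.single (lastF d hd) (1 : ℤ))) = phiu p d a Φt := by
  rw [Uh_apply, Pi.single_eq_same, zpow_one]
  rw [Finset.prod_eq_one, one_mul]
  intro i _
  rw [Pi.single_eq_of_ne (upF_ne_lastF d hd i), zpow_zero]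

lemma Uh_neg_a (hd : 2 ≤ d) (halast : a (lastF d hd) = 0) :
    Uh p d a Φt hd (ofAdd (-a)) = ∏ i, yu p d Φt i ^ (-(a (upF d i))) := by
  rw [Uh_apply]
  simp only [Pi.neg_apply, halast, neg_zero, zpow_zero, mul_one]

/-- The forward ring homomorphism. -/
noncomputable def fhom (hd : 2 ≤ d) :
    AddMonoidAlgebra (ZMod p) (Fin d → ℤ) →+* Lloc p d Φt :=
  AddMonoidAlgebra.liftNCRingHom ((algebraMap (MvPolynomial (Fin (d - 1)) (ZMod p)) (Lloc p d Φt)).comp MvPolynomial.C)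
    ((Units.coeHom _).comp (Uh p d a Φt hd)) (fun _ _ => Commute.all _ _)

lemma fhom_single (hd : 2 ≤ d) (m : Fin d → ℤ) (c : ZMod p) :
    fhom p d a Φt hd (AddMonoidAlgebra.single m c) =
      algebraMap (MvPolynomial (Fin (d - 1)) (ZMod p)) (Lloc p d Φt) (MvPolynomial.C c) * (Uh p d a Φt hd (ofAdd m) : Lloc p d Φt) := by
  show AddMonoidAlgebra.liftNC _ _ _ = _
  rw [AddMonoidAlgebra.liftNC_single]
  rfl

lemma fhom_comp_iota (hd : 2 ≤ d) :
    (fhom p d a Φt hd).comp (iota p d) = algebraMap (MvPolynomial (Fin (d - 1)) (ZMod p)) (Lloc p d Φt) := by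
  apply MvPolynomial.ringHom_ext
  · intro r
    rw [RingHom.comp_apply, iota_C, fhom_single]
    rw [show ofAdd (0 : Fin d → ℤ) = 1 from rfl, map_one, Units.val_one, mul_one]
  · intro i
    rw [RingHom.comp_apply, iota_X, fhom_single, Uh_single_up, map_one, map_one, one_mul, yu_val]


variable (Φ : AddMonoidAlgebra (ZMod p) (Fin d → ℤ))

noncomputable abbrev Igen : Ideal (AddMonoidAlgebra (ZMod p) (Fin d → ℤ)) :=
  Ideal.span {(AddMonoidAlgebra.single
      (fun i : Fin d => if (i : ℕ) = d - 1 then (1 : ℤ) else 0) (1 : ZMod p)) - Φ}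

abbrev Qr := AddMonoidAlgebra (ZMod p) (Fin d → ℤ) ⧸ Igen p d Φ

/-- Monomials become units in the quotient. -/
noncomputable def Zu (m : Fin d → ℤ) : (Qr p d Φ)ˣ where
  val := Ideal.Quotient.mk _ (AddMonoidAlgebra.single m (1 : ZMod p))
  inv := Ideal.Quotient.mk _ (AddMonoidAlgebra.single (-m) (1 : ZMod p))
  val_inv := by
    rw [← map_mul, AddMonoidAlgebra.single_mul_single, add_neg_cancel, mul_one,
      ← AddMonoidAlgebra.one_def, map_one]
  inv_val := by
    rw [← map_mul, AddMonoidAlgebra.single_mul_single, neg_add_cancel, mul_one,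
      ← AddMonoidAlgebra.one_def, map_one]

noncomputable def Zh : Multiplicative (Fin d → ℤ) →* (Qr p d Φ)ˣ :=
  MonoidHom.mk' (fun m => Zu p d Φ m.toAdd)
    (fun x y => by
      apply Units.ext
      show Ideal.Quotient.mk _ _ = _
      rw [toAdd_mul]
      rw [show (AddMonoidAlgebra.single (x.toAdd + y.toAdd) (1 : ZMod p)) =
        AddMonoidAlgebra.single x.toAdd (1 : ZMod p) *
          AddMonoidAlgebra.single y.toAdd (1 : ZMod p) by
          rw [AddMonoidAlgebra.single_mul_single, mul_one]]
      rw [map_mul]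
      rfl)

lemma Zu_mul (m m' : Fin d → ℤ) :
    Zu p d Φ m * Zu p d Φ m' = Zu p d Φ (m + m') :=
  (map_mul (Zh p d Φ) (ofAdd m) (ofAdd m')).symm

lemma Zu_zpow (m : Fin d → ℤ) (n : ℤ) : Zu p d Φ m ^ n = Zu p d Φ (n • m) := by
  have := (map_zpow (Zh p d Φ) (ofAdd m) n).symm
  rwa [← ofAdd_zsmul] at this

/-- The reverse ring homomorphism on polynomials. -/
noncomputable def ghom : MvPolynomial (Fin (d - 1)) (ZMod p) →+* Qr p d Φ :=
  (Ideal.Quotient.mk (Igen p d Φ)).comp (iota p d)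

lemma Zu_val (m : Fin d → ℤ) :
    (Zu p d Φ m : Qr p d Φ) =
      Ideal.Quotient.mk (Igen p d Φ) (AddMonoidAlgebra.single m (1 : ZMod p)) := rfl

lemma mk_Phi (hd : 2 ≤ d) :
    Ideal.Quotient.mk (Igen p d Φ) Φ = (Zu p d Φ (Pi.single (lastF d hd) (1 : ℤ)) : Qr p d Φ) := by
  rw [Zu_val, ← lastfun_eq d hd]
  refine (Ideal.Quotient.mk_eq_mk_iff_sub_mem _ _).mpr ?_
  rw [← neg_sub]
  exact neg_mem (Ideal.subset_span rfl)

lemma ghom_X (i : Fin (d - 1)) :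
    ghom p d Φ (MvPolynomial.X i) = (Zu p d Φ (Pi.single (upF d i) (1 : ℤ)) : Qr p d Φ) := by
  show Ideal.Quotient.mk _ (iota p d (MvPolynomial.X i)) = _
  rw [iota_X]
  rfl

lemma ghom_C (c : ZMod p) :
    ghom p d Φ (MvPolynomial.C c) =
      Ideal.Quotient.mk (Igen p d Φ) (AddMonoidAlgebra.single (0 : Fin d → ℤ) c) := by
  show Ideal.Quotient.mk _ (iota p d (MvPolynomial.C c)) = _
  rw [iota_C]

lemma iota_eq_of_hfact (hfact : Φ = AddMonoidAlgebra.single (-a) (1 : ZMod p) * iota p d Φt) :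
    iota p d Φt = AddMonoidAlgebra.single a (1 : ZMod p) * Φ := by
  rw [hfact, ← mul_assoc, AddMonoidAlgebra.single_mul_single, add_neg_cancel, mul_one,
    ← AddMonoidAlgebra.one_def, one_mul]

lemma ghom_Phit (hd : 2 ≤ d)
    (hfact : Φ = AddMonoidAlgebra.single (-a) (1 : ZMod p) * iota p d Φt) :
    ghom p d Φ Φt =
      ((Zu p d Φ a * Zu p d Φ (Pi.single (lastF d hd) (1 : ℤ)) : (Qr p d Φ)ˣ) : Qr p d Φ) := by
  show Ideal.Quotient.mk _ (iota p d Φt) = _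
  rw [iota_eq_of_hfact p d a Φt Φ hfact, map_mul, mk_Phi p d Φ hd, Units.val_mul]
  rfl

lemma ghom_units (hd : 2 ≤ d)
    (hfact : Φ = AddMonoidAlgebra.single (-a) (1 : ZMod p) * iota p d Φt) :
    ∀ y : Smon p d Φt, IsUnit (ghom p d Φ y) := by
  rintro ⟨y, hy⟩
  induction hy using Submonoid.closure_induction with
  | mem x hx =>
    rw [Set.mem_insert_iff] at hx
    rcases hx with hx | ⟨i, rfl⟩
    · subst hx
      rw [show ((⟨x, Submonoid.subset_closure (Set.mem_insert _ _)⟩ : Smon p d x) : MvPolynomial (Fin (d - 1)) (ZMod p)) = x from rfl]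
      rw [ghom_Phit p d a x Φ hd hfact]
      exact Units.isUnit _
    · rw [ghom_X]
      exact Units.isUnit _
  | one => simp
  | mul x y _ _ hx hy => rw [map_mul]; exact hx.mul hy


noncomputable def gbar (hd : 2 ≤ d)
    (hfact : Φ = AddMonoidAlgebra.single (-a) (1 : ZMod p) * iota p d Φt) :
    Lloc p d Φt →+* Qr p d Φ :=
  IsLocalization.lift (M := Smon p d Φt) (ghom_units p d a Φt Φ hd hfact)

lemma gbar_algebraMap (hd : 2 ≤ d)
    (hfact : Φ = AddMonoidAlgebra.single (-a) (1 : ZMod p) * iota p d Φt)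
    (x : MvPolynomial (Fin (d - 1)) (ZMod p)) :
    gbar p d a Φt Φ hd hfact (algebraMap _ (Lloc p d Φt) x) = ghom p d Φ x :=
  IsLocalization.lift_eq _ _

lemma map_yu (hd : 2 ≤ d)
    (hfact : Φ = AddMonoidAlgebra.single (-a) (1 : ZMod p) * iota p d Φt) (i : Fin (d - 1)) :
    Units.map (gbar p d a Φt Φ hd hfact).toMonoidHom (yu p d Φt i) =
      Zu p d Φ (Pi.single (upF d i) (1 : ℤ)) := by
  apply Units.ext
  show gbar p d a Φt Φ hd hfact (yu p d Φt i : Lloc p d Φt) = _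
  rw [yu_val, gbar_algebraMap, ghom_X]

lemma map_su (hd : 2 ≤ d)
    (hfact : Φ = AddMonoidAlgebra.single (-a) (1 : ZMod p) * iota p d Φt) :
    Units.map (gbar p d a Φt Φ hd hfact).toMonoidHom (su p d Φt) =
      Zu p d Φ a * Zu p d Φ (Pi.single (lastF d hd) (1 : ℤ)) := by
  apply Units.ext
  show gbar p d a Φt Φ hd hfact (su p d Φt : Lloc p d Φt) = _
  rw [su_val, gbar_algebraMap, ghom_Phit p d a Φt Φ hd hfact]

lemma Zu_prod {ι : Type*} (s : Finset ι) (c : ι → Fin d → ℤ) :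
    (∏ i ∈ s, Zu p d Φ (c i)) = Zu p d Φ (∑ i ∈ s, c i) := by
  calc (∏ i ∈ s, Zu p d Φ (c i)) = ∏ i ∈ s, Zh p d Φ (ofAdd (c i)) := rfl
    _ = Zh p d Φ (∏ i ∈ s, ofAdd (c i)) := (map_prod _ _ _).symm
    _ = Zh p d Φ (ofAdd (∑ i ∈ s, c i)) := by rw [ofAdd_sum]
    _ = _ := rfl

lemma sum_neg_a (hd : 2 ≤ d) (halast : a (lastF d hd) = 0) :
    (∑ i : Fin (d - 1), (-(a (upF d i))) • Pi.single (upF d i) (1 : ℤ)) = -a := by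
  funext j
  rw [Finset.sum_apply]
  by_cases h : (j : ℕ) < d - 1
  · rw [Finset.sum_eq_single ⟨(j : ℕ), h⟩]
    · have hj : upF d ⟨(j : ℕ), h⟩ = j := rfl
      rw [hj, Pi.smul_apply, Pi.single_eq_same, smul_eq_mul, mul_one, Pi.neg_apply]
    · intro b _ hb
      have hbj : j ≠ upF d b := by
        intro hc
        exact hb (Fin.ext (by simpa [upF] using congrArg Fin.val hc.symm))
      rw [Pi.smul_apply, Pi.single_eq_of_ne hbj, smul_zero]
    · intro hmem; exact absurd (Finset.mem_univ _) hmem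
  · have hj : j = lastF d hd := Fin.ext (by have := j.isLt; simp [lastF]; omega)
    rw [Finset.sum_eq_zero, Pi.neg_apply, hj, halast, neg_zero]
    intro i _
    rw [Pi.smul_apply, Pi.single_eq_of_ne (hj ▸ (upF_ne_lastF d hd i).symm : j ≠ upF d i),
      smul_zero]

lemma map_phiu (hd : 2 ≤ d) (halast : a (lastF d hd) = 0)
    (hfact : Φ = AddMonoidAlgebra.single (-a) (1 : ZMod p) * iota p d Φt) :
    Units.map (gbar p d a Φt Φ hd hfact).toMonoidHom (phiu p d a Φt) =
      Zu p d Φ (Pi.single (lastF d hd) (1 : ℤ)) := by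
  rw [phiu, map_mul, map_prod, map_su p d a Φt Φ hd hfact]
  have : ∀ i : Fin (d - 1),
      Units.map (gbar p d a Φt Φ hd hfact).toMonoidHom (yu p d Φt i ^ (-(a (upF d i)))) =
        Zu p d Φ ((-(a (upF d i))) • Pi.single (upF d i) (1 : ℤ)) := by
    intro i
    rw [map_zpow, map_yu p d a Φt Φ hd hfact, Zu_zpow]
  rw [Finset.prod_congr rfl (fun i _ => this i), Zu_prod, sum_neg_a d a hd halast]
  rw [mul_assoc, Zu_mul, Zu_mul]
  congr 1
  abel

lemma key_units (hd : 2 ≤ d) (halast : a (lastF d hd) = 0)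
    (hfact : Φ = AddMonoidAlgebra.single (-a) (1 : ZMod p) * iota p d Φt) (m : Fin d → ℤ) :
    Units.map (gbar p d a Φt Φ hd hfact).toMonoidHom (Uh p d a Φt hd (ofAdd m)) =
      Zu p d Φ m := by
  have hWZ : MonoidHom.toAdditiveRight
      ((Units.map (gbar p d a Φt Φ hd hfact).toMonoidHom).comp (Uh p d a Φt hd)) =
      MonoidHom.toAdditiveRight (Zh p d Φ) := by
    refine AddMonoidHom.functions_ext (I := Fin d) (M := fun _ => ℤ) (Additive (Qr p d Φ)ˣ) _ _ (fun j y => ?_)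
    have hy : Pi.single j y = y • (Pi.single j 1 : Fin d → ℤ) := by
      funext t
      simp only [Pi.single_apply, Pi.smul_apply, smul_eq_mul]
      split <;> simp
    rw [hy, map_zsmul, map_zsmul]
    congr 1
    show Additive.ofMul
        ((Units.map (gbar p d a Φt Φ hd hfact).toMonoidHom) (Uh p d a Φt hd (ofAdd (Pi.single j (1 : ℤ))))) =
      Additive.ofMul (Zh p d Φ (ofAdd (Pi.single j (1 : ℤ))))
    congr 1
    by_cases h : (j : ℕ) < d - 1
    · have hj : j = upF d ⟨(j : ℕ), h⟩ := rfl
      rw [hj, Uh_single_up, map_yu p d a Φt Φ hd hfact]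
      rfl
    · have hj : j = lastF d hd := Fin.ext (by have := j.isLt; simp [lastF]; omega)
      rw [hj, Uh_single_last, map_phiu p d a Φt Φ hd halast hfact]
      rfl
  have := DFunLike.congr_fun hWZ m
  simp at this
  exact this


lemma fhom_Phi (hd : 2 ≤ d) (halast : a (lastF d hd) = 0)
    (hfact : Φ = AddMonoidAlgebra.single (-a) (1 : ZMod p) * iota p d Φt) :
    fhom p d a Φt hd Φ = (phiu p d a Φt : Lloc p d Φt) := by
  rw [hfact, map_mul, fhom_single, map_one, map_one, one_mul]
  have h1 : (fhom p d a Φt hd) (iota p d Φt) =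
      algebraMap (MvPolynomial (Fin (d - 1)) (ZMod p)) (Lloc p d Φt) Φt :=
    DFunLike.congr_fun (fhom_comp_iota p d a Φt hd) Φt
  rw [h1, Uh_neg_a p d a Φt hd halast, ← su_val, ← Units.val_mul, mul_comm (∏ i, yu p d Φt i ^ (-(a (upF d i)))) (su p d Φt), phiu]

lemma fhom_gen (hd : 2 ≤ d) (halast : a (lastF d hd) = 0)
    (hfact : Φ = AddMonoidAlgebra.single (-a) (1 : ZMod p) * iota p d Φt) :
    fhom p d a Φt hd (AddMonoidAlgebra.single
      (fun i : Fin d => if (i : ℕ) = d - 1 then (1 : ℤ) else 0) (1 : ZMod p) - Φ) = 0 := by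
  rw [map_sub, fhom_Phi p d a Φt Φ hd halast hfact, lastfun_eq d hd, fhom_single, map_one, map_one,
    one_mul, Uh_single_last, sub_self]

end Stmt19

open Stmt19 Multiplicative in
/-- Write `Φ = X^{−a}·Φ̃` with `a ∈ ℕ^{d−1} × {0}` and `Φ̃` an ordinary
polynomial in `𝔽_p[Y_1,…,Y_{d−1}]` not divisible by any variable.  Then
`R_d/⟨X_d − Φ⟩` is ring-isomorphic to the localization of `𝔽_p[Y_1,…,Y_{d−1}]` at the
multiplicative submonoid generated by `{Y_1,…,Y_{d−1}, Φ̃}`. -/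
theorem quotient_iso_localization (p d : ℕ) [Fact p.Prime] (hd : 2 ≤ d)
    (Φ : AddMonoidAlgebra (ZMod p) (Fin d → ℤ))
    (hΦsupp : ∀ m ∈ Φ.coeff.support, m ⟨d - 1, by omega⟩ = 0)
    (hΦ2 : 2 ≤ Φ.coeff.support.card)
    (a : Fin d → ℤ) (ha : ∀ i, 0 ≤ a i) (halast : a ⟨d - 1, by omega⟩ = 0)
    (Φt : MvPolynomial (Fin (d - 1)) (ZMod p))
    (hΦt : ∀ i : Fin (d - 1), ¬ (MvPolynomial.X i ∣ Φt))
    (hfact : Φ = AddMonoidAlgebra.single (-a) (1 : ZMod p) *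
      (show AddMonoidAlgebra (ZMod p) (Fin d → ℤ) from AddMonoidAlgebra.ofCoeff (
        Finsupp.mapDomain
          (fun (v : Fin (d - 1) →₀ ℕ) (i : Fin d) =>
            if h : (i : ℕ) < d - 1 then (v ⟨(i : ℕ), h⟩ : ℤ) else 0) (AddMonoidAlgebra.coeff Φt)))) :
    Nonempty
      ((AddMonoidAlgebra (ZMod p) (Fin d → ℤ) ⧸
          Ideal.span {(AddMonoidAlgebra.single
              (fun i : Fin d => if (i : ℕ) = d - 1 then (1 : ℤ) else 0) (1 : ZMod p)) - Φ}) ≃+*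
        Localization
          (Submonoid.closure
            (insert Φt (Set.range (MvPolynomial.X (R := ZMod p) (σ := Fin (d - 1))))))) := by
  have hfact' : Φ = AddMonoidAlgebra.single (-a) (1 : ZMod p) * iota p d Φt := by
    rw [hfact, iota_apply]
  have halast' : a (lastF d hd) = 0 := halast
  -- the forward map, descended to the quotient
  have h0 : ∀ x ∈ Igen p d Φ, fhom p d a Φt hd x = 0 := by
    intro x hx
    rw [Ideal.mem_span_singleton] at hx
    obtain ⟨c, rfl⟩ := hx
    rw [map_mul, fhom_gen p d a Φt Φ hd halast' hfact', zero_mul]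
  let fbar : Qr p d Φ →+* Lloc p d Φt := Ideal.Quotient.lift (Igen p d Φ) (fhom p d a Φt hd) h0
  let gb : Lloc p d Φt →+* Qr p d Φ := gbar p d a Φt Φ hd hfact'
  have hfg : fbar.comp gb = RingHom.id (Lloc p d Φt) := by
    apply IsLocalization.ringHom_ext (Smon p d Φt)
    apply RingHom.ext
    intro x
    rw [RingHom.comp_apply, RingHom.comp_apply, RingHom.comp_apply, RingHom.id_apply]
    rw [show gb (algebraMap _ _ x) = ghom p d Φ x from gbar_algebraMap p d a Φt Φ hd hfact' x]
    show fbar (Ideal.Quotient.mk _ (iota p d x)) = _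
    rw [Ideal.Quotient.lift_mk]
    exact DFunLike.congr_fun (fhom_comp_iota p d a Φt hd) x
  have hgf : gb.comp fbar = RingHom.id (Qr p d Φ) := by
    apply Ideal.Quotient.ringHom_ext
    apply AddMonoidAlgebra.ringHom_ext
    · intro b
      rw [RingHom.comp_apply, RingHom.comp_apply, RingHom.comp_apply, RingHom.id_apply]
      rw [show fbar (Ideal.Quotient.mk _ (AddMonoidAlgebra.single (0 : Fin d → ℤ) b)) =
        fhom p d a Φt hd (AddMonoidAlgebra.single (0 : Fin d → ℤ) b) from
        Ideal.Quotient.lift_mk _ _ _]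
      rw [fhom_single, show ofAdd (0 : Fin d → ℤ) = 1 from rfl, map_one, Units.val_one, mul_one]
      rw [show gb (algebraMap _ _ (MvPolynomial.C b)) = ghom p d Φ (MvPolynomial.C b) from
        gbar_algebraMap p d a Φt Φ hd hfact' (MvPolynomial.C b)]
      rw [ghom_C]
    · intro m
      rw [RingHom.comp_apply, RingHom.comp_apply, RingHom.comp_apply, RingHom.id_apply]
      rw [show fbar (Ideal.Quotient.mk _ (AddMonoidAlgebra.single m (1 : ZMod p))) =
        fhom p d a Φt hd (AddMonoidAlgebra.single m (1 : ZMod p)) from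
        Ideal.Quotient.lift_mk _ _ _]
      rw [fhom_single, map_one, map_one, one_mul]
      rw [show gb ((Uh p d a Φt hd (ofAdd m) : (Lloc p d Φt)ˣ) : Lloc p d Φt) =
        ((Units.map gb.toMonoidHom (Uh p d a Φt hd (ofAdd m)) : (Qr p d Φ)ˣ) : Qr p d Φ) from rfl]
      rw [key_units p d a Φt Φ hd halast' hfact' m]
      rfl
  exact ⟨RingEquiv.ofRingHom fbar gb hfg hgf⟩
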